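/- Let μ¹, μ² be compactly supported probability measures on R^d (support of diameter ≤ R) and T an optimal transport map for W₁ with T#μ¹ = μ². If P is bounded and Lipschitz, then ∫∫ |P(x,y)(y-x) - P(T(x),T(y))(T(y)-T(x))| dμ¹(x)dμ¹(y) ≤ C(‖P‖_{W^{1,∞}}, R) · W₁(μ¹, μ²), where W₁ denotes the 1-Wasserstein distance. -/

import Mathlib

open MeasureTheory

/-- Stability estimate for the nonlocal interaction term along an optimal transport map: if
`μ¹, μ²` are compactly supported probability measures (supports of diameter `≤ R`), `Tm` is an
optimal transport map for `W₁` pushing `μ¹` to `μ²`, and `P` is bounded and Lipschitz, then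
`∫∫ ‖P(x,y)(y-x) - P(Tx,Ty)(Ty-Tx)‖ dμ¹dμ¹ ≤ C·W₁(μ¹,μ²)`, with `C = C(‖P‖_{W^{1,∞}}, R)` and
`W₁(μ¹,μ²) = ∫‖x - Tx‖ dμ¹`. -/
theorem interaction_term_wasserstein_stability (d : ℕ) (R Cp : ℝ) (L : NNReal) :
    ∃ C : ℝ, ∀ (P : EuclideanSpace ℝ (Fin d) → EuclideanSpace ℝ (Fin d) → ℝ)
      (μ1 μ2 : Measure (EuclideanSpace ℝ (Fin d))),
      IsProbabilityMeasure μ1 → IsProbabilityMeasure μ2 →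
      (∀ x y, |P x y| ≤ Cp) → LipschitzWith L (Function.uncurry P) →
      ∀ (S1 S2 : Set (EuclideanSpace ℝ (Fin d))),
        Bornology.IsBounded S1 → Bornology.IsBounded S2 →
        μ1 S1ᶜ = 0 → μ2 S2ᶜ = 0 → Metric.diam S1 ≤ R → Metric.diam S2 ≤ R →
      ∀ (Tm : EuclideanSpace ℝ (Fin d) → EuclideanSpace ℝ (Fin d)),
        AEMeasurable Tm μ1 → μ1.map Tm = μ2 →
        Integrable (fun x => ‖x - Tm x‖) μ1 →
        -- optimality of the transport map `Tm` for the `W₁`-cost: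
        (∀ π : Measure (EuclideanSpace ℝ (Fin d) × EuclideanSpace ℝ (Fin d)),
          π.map Prod.fst = μ1 → π.map Prod.snd = μ2 →
          (∫ x, ‖x - Tm x‖ ∂μ1) ≤ ∫ p, ‖p.1 - p.2‖ ∂π) →
        ∫ x, ∫ y, ‖P x y • (y - x) - P (Tm x) (Tm y) • (Tm y - Tm x)‖ ∂μ1 ∂μ1
          ≤ C * ∫ x, ‖x - Tm x‖ ∂μ1 := by
  refine ⟨2 * (|Cp| + L * |R|), ?_⟩
  intro P μ1 μ2 hμ1 hμ2 hPb hPl S1 S2 hS1b hS2b hμ1S hμ2S hd1 hd2 Tm hTm hmap hint hopt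
  set K : ℝ := |Cp| + L * |R| with hK
  set s : EuclideanSpace ℝ (Fin d) → ℝ := fun x => ‖x - Tm x‖ with hs
  set W : ℝ := ∫ x, s x ∂μ1 with hW
  -- a.e. x, Tm x ∈ S2
  obtain ⟨N, hNsub, hNm, hNz⟩ := exists_measurable_superset_of_null hμ2S
  have hmapN : μ1 (Tm ⁻¹' N) = 0 := by
    rw [← Measure.map_apply_of_aemeasurable hTm hNm, hmap]; exact hNz
  have hae : ∀ᵐ x ∂μ1, Tm x ∈ S2 := by
    rw [ae_iff]
    refine measure_mono_null ?_ hmapN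
    intro x hx
    exact hNsub hx
  -- pointwise key bound
  have key : ∀ x y : EuclideanSpace ℝ (Fin d), Tm x ∈ S2 → Tm y ∈ S2 →
      ‖P x y • (y - x) - P (Tm x) (Tm y) • (Tm y - Tm x)‖ ≤ K * (s x + s y) := by
    intro x y hx hy
    have h1 : P x y • (y - x) - P (Tm x) (Tm y) • (Tm y - Tm x)
        = P x y • ((y - x) - (Tm y - Tm x))
          + (P x y - P (Tm x) (Tm y)) • (Tm y - Tm x) := by
      simp only [smul_sub, sub_smul]; abel
    have h2 : ‖(y - x) - (Tm y - Tm x)‖ ≤ s y + s x := by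
      have : (y - x) - (Tm y - Tm x) = (y - Tm y) - (x - Tm x) := by abel
      rw [this]
      exact norm_sub_le _ _
    have h3 : ‖Tm y - Tm x‖ ≤ |R| := by
      have := Metric.dist_le_diam_of_mem hS2b hy hx
      rw [dist_eq_norm] at this
      exact this.trans (hd2.trans (le_abs_self R))
    have h4 : |P x y - P (Tm x) (Tm y)| ≤ (L : ℝ) * (s x + s y) := by
      have hl := hPl.dist_le_mul (x, y) (Tm x, Tm y)
      simp only [Function.uncurry, Prod.dist_eq] at hl
      rw [Real.dist_eq] at hl
      refine hl.trans ?_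
      have hm : max (dist x (Tm x)) (dist y (Tm y)) ≤ s x + s y := by
        simp only [hs, dist_eq_norm]
        exact max_le (le_add_of_nonneg_right (norm_nonneg _))
          (le_add_of_nonneg_left (norm_nonneg _))
      exact mul_le_mul_of_nonneg_left hm L.2
    have h5 : |P x y| ≤ |Cp| := (hPb x y).trans (le_abs_self Cp)
    rw [h1]
    have hsum : s x + s y = s y + s x := add_comm _ _
    calc ‖P x y • ((y - x) - (Tm y - Tm x))
          + (P x y - P (Tm x) (Tm y)) • (Tm y - Tm x)‖
        ≤ ‖P x y • ((y - x) - (Tm y - Tm x))‖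
          + ‖(P x y - P (Tm x) (Tm y)) • (Tm y - Tm x)‖ := norm_add_le _ _
      _ = |P x y| * ‖(y - x) - (Tm y - Tm x)‖
          + |P x y - P (Tm x) (Tm y)| * ‖Tm y - Tm x‖ := by
          rw [norm_smul, norm_smul, Real.norm_eq_abs, Real.norm_eq_abs]
      _ ≤ |Cp| * (s x + s y) + ((L : ℝ) * (s x + s y)) * |R| := by
          have h2' : ‖(y - x) - (Tm y - Tm x)‖ ≤ s x + s y := by
            rw [hsum]; exact h2
          refine add_le_add ?_ ?_
          · exact mul_le_mul h5 h2' (norm_nonneg _) (abs_nonneg _)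
          · refine mul_le_mul h4 h3 (norm_nonneg _) ?_
            have hsx : (0:ℝ) ≤ s x := norm_nonneg _
            have hsy : (0:ℝ) ≤ s y := norm_nonneg _
            positivity
      _ = K * (s x + s y) := by rw [hK]; ring
  have hsint : Integrable s μ1 := hint
  -- inner integral bound
  have inner : ∀ x : EuclideanSpace ℝ (Fin d), Tm x ∈ S2 →
      ∫ y, ‖P x y • (y - x) - P (Tm x) (Tm y) • (Tm y - Tm x)‖ ∂μ1
        ≤ K * (s x + W) := by
    intro x hx
    have hgi : Integrable (fun y => K * (s x + s y)) μ1 :=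
      ((integrable_const (s x)).add hsint).const_mul K
    have hle := integral_mono_of_nonneg
      (Filter.Eventually.of_forall fun y => norm_nonneg _) hgi
      (hae.mono fun y hy => key x y hx hy)
    refine hle.trans_eq ?_
    rw [integral_const_mul K, integral_add (integrable_const (s x)) hsint,
      integral_const]
    simp [measure_univ]
    exact Or.inl hW.symm
  have hGi : Integrable (fun x => K * (s x + W)) μ1 :=
    (hsint.add (integrable_const W)).const_mul K
  calc ∫ x, ∫ y, ‖P x y • (y - x) - P (Tm x) (Tm y) • (Tm y - Tm x)‖ ∂μ1 ∂μ1
      ≤ ∫ x, K * (s x + W) ∂μ1 :=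
        integral_mono_of_nonneg
          (Filter.Eventually.of_forall fun x => integral_nonneg fun y => norm_nonneg _)
          hGi (hae.mono fun x hx => inner x hx)
    _ = 2 * K * W := by
        rw [integral_const_mul K, integral_add hsint (integrable_const W),
          integral_const]
        simp [measure_univ]
        ring
    _ = 2 * (|Cp| + L * |R|) * ∫ x, ‖x - Tm x‖ ∂μ1 := by rw [hK, hW]
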